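/- Let φ be a perfect 2-coloring of Ci_∞(D_n) with positive outer degrees b, c and b + c = 2n. Then φ is periodic with period 4n, and moreover φ(i - 2n + 1) = φ(i + 2n + 1) for every integer i. -/

import Mathlib

/-- Neighborhood of `i` in the infinite circulant graph `Ci_∞(D_n)`,
`D_n = {±1, ±3, …, ±(2n-1)}`: the integers at odd distance less than `2n` from `i`. -/
noncomputable def nbrs (n : ℕ) (i : ℤ) : Finset ℤ :=
  (Finset.Icc (i - (2*(n:ℤ) - 1)) (i + (2*(n:ℤ) - 1))).filter (fun j => Odd (j - i))

/-- `φ` is a perfect 2-coloring of `Ci_∞(D_n)` with outer degrees `(b, c)`: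
every vertex of color 0 (black) has exactly `b` neighbors of color 1 (white), and
every vertex of color 1 has exactly `c` neighbors of color 0. -/
def Perfect2 (n : ℕ) (φ : ℤ → Fin 2) (b c : ℕ) : Prop :=
  (∀ i, φ i = 0 → ((nbrs n i).filter (fun j => φ j = 1)).card = b) ∧
  (∀ i, φ i = 1 → ((nbrs n i).filter (fun j => φ j = 0)).card = c)

/-- If `b + c = 2n`, then `φ` is periodic with period `4n` and
`φ(i-2n+1) = φ(i+2n+1)` for every `i`. -/
theorem sum_two_n_period (n b c : ℕ) (hn : 0 < n) (hb : 0 < b) (hc : 0 < c)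
    (hbc : b + c = 2*n)
    (φ : ℤ → Fin 2) (hφ : Perfect2 n φ b c) :
    (∀ i : ℤ, φ (i + 4*(n:ℤ)) = φ i) ∧
    (∀ i : ℤ, φ (i - 2*(n:ℤ) + 1) = φ (i + 2*(n:ℤ) + 1)) := by
  obtain ⟨hφ0, hφ1⟩ := hφ
  have fin2 : ∀ x : Fin 2, x = 0 ∨ x = 1 := by decide
  -- every vertex has exactly 2n neighbors
  have hcard : ∀ i : ℤ, (nbrs n i).card = 2 * n := by
    intro i
    have himg : nbrs n i = (Finset.Icc (-(n:ℤ)) ((n:ℤ)-1)).image (fun m => i + 2*m + 1) := by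
      ext j
      simp only [nbrs, Finset.mem_filter, Finset.mem_Icc, Finset.mem_image, Int.odd_iff]
      constructor
      · rintro ⟨⟨h1, h2⟩, h3⟩
        exact ⟨(j - i - 1) / 2, ⟨by omega, by omega⟩, by omega⟩
      · rintro ⟨m, ⟨hm1, hm2⟩, rfl⟩
        exact ⟨⟨by omega, by omega⟩, by omega⟩
    rw [himg, Finset.card_image_of_injective _ (fun a b h => by omega), Int.card_Icc]
    omega
  -- every vertex has exactly b white neighbors
  have hkey : ∀ i : ℤ, ((nbrs n i).filter (fun j => φ j = 1)).card = b := by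
    intro i
    rcases fin2 (φ i) with h | h
    · exact hφ0 i h
    · have hc' := hφ1 i h
      have hsplit := Finset.card_filter_add_card_filter_not
        (s := nbrs n i) (p := fun j => φ j = 0)
      have heq : (nbrs n i).filter (fun j => ¬ φ j = 0) =
          (nbrs n i).filter (fun j => φ j = 1) := by
        apply Finset.filter_congr
        intro j _
        rcases fin2 (φ j) with h' | h' <;> simp [h']
      rw [heq, hcard i, hc'] at hsplit
      omega
  -- the key step
  have hstep : ∀ i : ℤ, φ (i - 2*(n:ℤ) + 1) = φ (i + 2*(n:ℤ) + 1) := by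
    intro i
    set u : ℤ := i - 2*(n:ℤ) + 1 with hu_def
    set v : ℤ := i + 2*(n:ℤ) + 1 with hv_def
    have hins : nbrs n (i + 2) = insert v ((nbrs n i).erase u) := by
      ext j
      simp only [nbrs, Finset.mem_insert, Finset.mem_erase, Finset.mem_filter,
        Finset.mem_Icc, Int.odd_iff, hu_def, hv_def]
      omega
    have huA : u ∈ nbrs n i := by
      simp only [nbrs, Finset.mem_filter, Finset.mem_Icc, Int.odd_iff, hu_def]
      omega
    have hvA : v ∉ (nbrs n i).erase u := by
      simp only [nbrs, Finset.mem_erase, Finset.mem_filter, Finset.mem_Icc,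
        Int.odd_iff, hu_def, hv_def]
      omega
    have h1 := hkey (i + 2)
    rw [hins, Finset.filter_insert] at h1
    have hWsub : ((nbrs n i).filter (fun j => φ j = 1)).erase u ⊆ (nbrs n i).erase u :=
      Finset.erase_subset_erase _ (Finset.filter_subset _ _)
    have hfe : ((nbrs n i).erase u).filter (fun j => φ j = 1) =
        ((nbrs n i).filter (fun j => φ j = 1)).erase u := Finset.filter_erase _ _ _
    rcases fin2 (φ u) with hu1 | hu1 <;> rcases fin2 (φ v) with hv1 | hv1
    · rw [hu1, hv1]
    · -- u black, v white: contradiction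
      exfalso
      rw [if_pos hv1, hfe, Finset.card_insert_of_notMem (fun hmem => hvA (hWsub hmem)),
        Finset.erase_eq_of_notMem (by simp [Finset.mem_filter, hu1]), hkey i] at h1
      omega
    · -- u white, v black: contradiction
      exfalso
      rw [if_neg (by simp [hv1]), hfe,
        Finset.card_erase_of_mem (Finset.mem_filter.mpr ⟨huA, hu1⟩), hkey i] at h1
      omega
    · rw [hu1, hv1]
  refine ⟨?_, hstep⟩
  intro i
  have h := hstep (i + 2*(n:ℤ) - 1)
  have e1 : i + 2*(n:ℤ) - 1 - 2*(n:ℤ) + 1 = i := by ring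
  have e2 : i + 2*(n:ℤ) - 1 + 2*(n:ℤ) + 1 = i + 4*(n:ℤ) := by ring
  rw [e1, e2] at h
  exact h.symm
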